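/- For all partial multifunctions f : ⊆ (X₀,δ_{X₀}) ⇉ (Y₀,δ_{Y₀}) and g : ⊆ (X₁,δ_{X₁}) ⇉ (Y₁,δ_{Y₁}) on represented spaces, f ⊞ g ≡_W f ⊔ g; indeed f ⊞ g ≤_sW f ⊔ g and f ⊔ g ≤_W f ⊞ g. -/

import Mathlib

attribute [local instance] Classical.propDecidable

namespace StrongWeihrauch

noncomputable section

/-! ### Cantor space, monotone approximations, and the evaluation map -/

/-- Cantor space `2^ω`; we identify subsets of `ω` with their characteristic functions. -/
abbrev Cantor : Type := ℕ → Bool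

/-- The coded triple `⟨n,s,i⟩`. -/
def tpl (n s i : ℕ) : ℕ := Nat.pair n (Nat.pair s i)

/-- A monotone approximation (Definition 3.1): every element has the form `⟨n,s,i⟩` with
`i < 2`; for each `n` there is at most one pair `(s,i)` with `⟨n,s,i⟩ ∈ a`; and the stages `s`
are strictly increasing in `n`. -/
def MonotoneApprox (a : Cantor) : Prop :=
  (∀ k, a k = true → ∃ n s i, i < 2 ∧ k = tpl n s i) ∧
  (∀ n s t i j, a (tpl n s i) = true → a (tpl n t j) = true → s = t ∧ i = j) ∧
  (∀ m n s t i j, a (tpl m s i) = true → a (tpl n t j) = true → m < n → s < t)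

/-- A total monotone approximation: every `n` gets a value. -/
def TotalMonotoneApprox (a : Cantor) : Prop :=
  MonotoneApprox a ∧ ∀ n, ∃ s i, i < 2 ∧ a (tpl n s i) = true

/-- The value of the evaluation map `e` on a (total) monotone approximation:
`eVal a n = i` iff `⟨n,s,i⟩ ∈ a` for some `s`. -/
def eVal (a : Cantor) : Cantor := fun n => decide (∃ s, a (tpl n s 1) = true)

/-- The evaluation map `e : ⊆ 2^ω → 2^ω`, the partial function whose domain is the set of
total monotone approximations `a`, with `e(a)(n) = i` iff `⟨n,s,i⟩ ∈ a` for some `s`. -/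
def evalMA : Cantor →. Cantor := fun a => ⟨TotalMonotoneApprox a, fun _ => eVal a⟩

/-! ### Turing functionals -/

/-- The oracle information available at stage `s`: the first `s` bits of `p`. -/
def initSeg (p : Cantor) (s : ℕ) : List Bool := (List.range s).map p

/-- A `{0,1}`-valued Turing functional on Cantor space, presented by a computable monotone
finite-prefix approximation: `approx σ n = some b` means that the computation on input `n`
with oracle prefix `σ` has converged, with output `b`. -/
structure TuringFunctional where
  approx : List Bool → ℕ → Option Bool
  computable : Computable₂ approx
  mono : ∀ σ τ n b, σ <+: τ → approx σ n = some b → approx τ n = some b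

namespace TuringFunctional

/-- `Φ^p(n)[s]↓`. -/
def ConvAt (Φ : TuringFunctional) (p : Cantor) (n s : ℕ) : Prop :=
  (Φ.approx (initSeg p s) n).isSome = true

/-- `s` is least such that `Φ^p(n)[s]↓`. -/
def LeastStage (Φ : TuringFunctional) (p : Cantor) (n s : ℕ) : Prop :=
  Φ.ConvAt p n s ∧ ∀ t, t < s → ¬ Φ.ConvAt p n t

/-- Convention 2.1: if `Φ^p(n)[s]↓` then `Φ^p(m)[s]↓` for all `m < n`, and for each `s`
there is at most one `n` for which `s` is least with `Φ^p(n)[s]↓`. -/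
def Convention (Φ : TuringFunctional) : Prop :=
  (∀ (p : Cantor) (s n m : ℕ), m < n → Φ.ConvAt p n s → Φ.ConvAt p m s) ∧
  (∀ (p : Cantor) (s n n' : ℕ), Φ.LeastStage p n s → Φ.LeastStage p n' s → n = n')

/-- The partial function `⊆ 2^ω → 2^ω` computed by `Φ`; it is defined at `p` exactly when
`Φ(p)` is total, in which case its value is the map `n ↦ Φ^p(n)`. -/
def eval (Φ : TuringFunctional) : Cantor →. Cantor :=
  fun p => ⟨∀ n, ∃ s b, Φ.approx (initSeg p s) n = some b,
    fun h n => (h n).choose_spec.choose⟩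

end TuringFunctional

/-- `a_{Φ(p)}`: the set of all `⟨n,s,i⟩` where `s` is least such that `Φ^p(n)[s]↓ = i`. -/
def approxSeq (Φ : TuringFunctional) (p : Cantor) : Cantor := fun k =>
  decide (∃ n s b, k = tpl n s (Bool.toNat b) ∧ Φ.LeastStage p n s ∧
    Φ.approx (initSeg p s) n = some b)

/-- Turing reducibility `q ≤_T p` on Cantor space. -/
def TuringLe (q p : Cantor) : Prop := ∃ Φ : TuringFunctional, Φ.eval p = Part.some q

/-! ### Pairing on Cantor space -/

/-- The effective join `⟨p,q⟩` on Cantor space. -/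
def pairC (p q : Cantor) : Cantor := fun n => if n % 2 = 0 then p (n / 2) else q (n / 2)

def leftC (r : Cantor) : Cantor := fun n => r (2 * n)

def rightC (r : Cantor) : Cantor := fun n => r (2 * n + 1)

/-- The singleton `{i} ⊆ ω` as an element of Cantor space. -/
def natSet (i : ℕ) : Cantor := fun n => decide (n = i)

/-- `⟨i,p⟩`, i.e. `⟨{i},p⟩`. -/
def inC (i : ℕ) (p : Cantor) : Cantor := pairC (natSet i) p

lemma leftC_pairC (p q : Cantor) : leftC (pairC p q) = p := by
  funext n
  have h1 : 2 * n % 2 = 0 := by omega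
  have h2 : 2 * n / 2 = n := by omega
  simp [leftC, pairC, h1, h2]

lemma rightC_pairC (p q : Cantor) : rightC (pairC p q) = q := by
  funext n
  have h1 : (2 * n + 1) % 2 = 1 := by omega
  have h2 : (2 * n + 1) / 2 = n := by omega
  simp [rightC, pairC, h1, h2]

lemma tpl_inj {n s i n' s' i' : ℕ} (h : tpl n s i = tpl n' s' i') :
    n = n' ∧ s = s' ∧ i = i' := by
  unfold tpl at h
  rw [Nat.pair_eq_pair] at h
  rcases h with ⟨h1, h2⟩
  rw [Nat.pair_eq_pair] at h2
  exact ⟨h1, h2.1, h2.2⟩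

lemma toNat_lt_two (b : Bool) : b.toNat < 2 := by cases b <;> decide

/-- Encoding of `q ∈ 2^ω` as a total monotone approximation evaluating to `q`. -/
def maEncode (q : Cantor) : Cantor := fun k => decide (∃ n, k = tpl n n (q n).toNat)

lemma maEncode_mem {q : Cantor} {k : ℕ} :
    maEncode q k = true ↔ ∃ n, k = tpl n n (q n).toNat := by
  simp [maEncode]

lemma maEncode_total (q : Cantor) : TotalMonotoneApprox (maEncode q) := by
  refine ⟨⟨?_, ?_, ?_⟩, ?_⟩
  · intro k hk
    obtain ⟨n, rfl⟩ := maEncode_mem.mp hk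
    exact ⟨n, n, (q n).toNat, toNat_lt_two _, rfl⟩
  · intro n s t i j h1 h2
    obtain ⟨m, hm⟩ := maEncode_mem.mp h1
    obtain ⟨m', hm'⟩ := maEncode_mem.mp h2
    obtain ⟨e1, e2, e3⟩ := tpl_inj hm
    obtain ⟨f1, f2, f3⟩ := tpl_inj hm'
    have hmm' : m = m' := by omega
    refine ⟨by omega, by rw [e3, f3, hmm']⟩
  · intro m n s t i j h1 h2 hmn
    obtain ⟨u, hu⟩ := maEncode_mem.mp h1
    obtain ⟨v, hv⟩ := maEncode_mem.mp h2
    obtain ⟨e1, e2, _⟩ := tpl_inj hu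
    obtain ⟨f1, f2, _⟩ := tpl_inj hv
    omega
  · intro n
    exact ⟨n, (q n).toNat, toNat_lt_two _, maEncode_mem.mpr ⟨n, rfl⟩⟩

lemma eVal_maEncode (q : Cantor) : eVal (maEncode q) = q := by
  funext n
  have hiff : (∃ s, maEncode q (tpl n s 1) = true) ↔ q n = true := by
    constructor
    · rintro ⟨s, hs⟩
      obtain ⟨m, hm⟩ := maEncode_mem.mp hs
      obtain ⟨e1, e2, e3⟩ := tpl_inj hm
      subst e1
      cases hq : q n
      · rw [hq] at e3; simp at e3
      · rfl
    · intro hq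
      refine ⟨n, maEncode_mem.mpr ⟨n, ?_⟩⟩
      rw [hq]
      rfl
  cases hq : q n
  · have hne : ¬ (∃ s, maEncode q (tpl n s 1) = true) := by
      intro h
      have ht := hiff.mp h
      rw [ht] at hq
      exact Bool.noConfusion hq
    simp [eVal, hne]
  · simp [eVal, hiff.mpr hq]

/-- An explicit non-(monotone approximation). -/
def badMA : Cantor := fun k => decide (k = tpl 0 0 0 ∨ k = tpl 0 1 0)

lemma badMA_not : ¬ TotalMonotoneApprox badMA := by
  rintro ⟨⟨-, h2, -⟩, -⟩
  have ha : badMA (tpl 0 0 0) = true := by simp [badMA]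
  have hb : badMA (tpl 0 1 0) = true := by simp [badMA]
  have := (h2 0 0 1 0 0 ha hb).1
  omega

/-! ### Represented spaces -/

/-- A represented space: a set `X` together with a partial surjection `δ : ⊆ 2^ω → X`. -/
structure RepSp : Type 1 where
  X : Type
  δ : Cantor →. X
  surj : ∀ x : X, ∃ p, x ∈ δ p

namespace RepSp

/-- The product representation of `X₀ × X₁`: `δ(⟨p₀,p₁⟩) = (δ₀(p₀), δ₁(p₁))`. -/
def prod (A B : RepSp) : RepSp where
  X := A.X × B.X
  δ := fun r => (A.δ (leftC r)).bind fun x => (B.δ (rightC r)).map fun y => (x, y)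
  surj := by
    rintro ⟨x, y⟩
    obtain ⟨p, hp⟩ := A.surj x
    obtain ⟨q, hq⟩ := B.surj y
    refine ⟨pairC p q, ?_⟩
    simp only [leftC_pairC, rightC_pairC, Part.mem_bind_iff]
    exact ⟨x, hp, Part.mem_map _ hq⟩

/-- The disjoint-union representation of `X₀ ⊔ X₁`: `δ(⟨i,p⟩) = ⟨i, δᵢ(p)⟩`. -/
def sum (A B : RepSp) : RepSp where
  X := A.X ⊕ B.X
  δ := fun r =>
    if leftC r = natSet 0 then (A.δ (rightC r)).map Sum.inl
    else if leftC r = natSet 1 then (B.δ (rightC r)).map Sum.inr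
    else Part.none
  surj := by
    rintro (x | y)
    · obtain ⟨p, hp⟩ := A.surj x
      refine ⟨inC 0 p, ?_⟩
      have e1 : leftC (inC 0 p) = natSet 0 := leftC_pairC _ _
      have e2 : rightC (inC 0 p) = p := rightC_pairC _ _
      simp only [e1, e2, if_pos rfl]
      exact Part.mem_map _ hp
    · obtain ⟨p, hp⟩ := B.surj y
      refine ⟨inC 1 p, ?_⟩
      have e1 : leftC (inC 1 p) = natSet 1 := leftC_pairC _ _
      have e2 : rightC (inC 1 p) = p := rightC_pairC _ _
      have hne : natSet 1 ≠ natSet 0 := by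
        intro h
        have := congrFun h 0
        simp [natSet] at this
      simp only [e1, e2, hne, if_neg, if_pos rfl, ite_false, ite_true]
      exact Part.mem_map _ hp

/-- The completion `Ŷ = Y ∪ {∞_Y}` (with `∞_Y` rendered as `none`), represented by
`δ_Ŷ(p) = δ_Y(e(p))` if `p` is a total monotone approximation with `e(p) ∈ dom(δ_Y)`, and
`δ_Ŷ(p) = ∞_Y` otherwise. -/
def hat (A : RepSp) : RepSp where
  X := Option A.X
  δ := fun p => Part.some (((evalMA p).bind A.δ).toOption)
  surj := by
    intro y
    match y with
    | none =>
        refine ⟨badMA, ?_⟩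
        rw [Part.mem_some_iff]
        have hd : ¬ ((evalMA badMA).bind A.δ).Dom := by
          rintro ⟨h1, -⟩
          exact badMA_not h1
        rw [eq_comm, Part.toOption_eq_none_iff]
        exact hd
    | some x =>
        obtain ⟨p, hp⟩ := A.surj x
        refine ⟨maEncode p, ?_⟩
        rw [Part.mem_some_iff, eq_comm, Part.toOption_eq_some_iff]
        exact Part.mem_bind
          (show p ∈ evalMA (maEncode p) from ⟨maEncode_total p, eVal_maEncode p⟩) hp

end RepSp

/-! ### Partial multifunctions and the Weihrauch reducibilities -/

/-- A partial multifunction `f : ⊆ X ⇉ Y` between represented spaces: `f.f x` is the set of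
solutions of the instance `x`, and the domain of `f` is the set of `x` with `f.f x ≠ ∅`. -/
structure MFn : Type 1 where
  A : RepSp
  B : RepSp
  f : A.X → Set B.X

namespace MFn

/-- The coproduct `f ⊔ g`. -/
def sqcup (f g : MFn) : MFn where
  A := f.A.sum g.A
  B := f.B.sum g.B
  f := Sum.elim (fun x => Sum.inl '' f.f x) (fun y => Sum.inr '' g.f y)

/-- The meet `f ⊓ g`, with `(f ⊓ g)(⟨x,y⟩) = ({0} × f(x)) ∪ ({1} × g(y))` for
`x ∈ dom f`, `y ∈ dom g`. -/
def sqcap (f g : MFn) : MFn where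
  A := f.A.prod g.A
  B := f.B.sum g.B
  f := fun xy =>
    if (f.f xy.1).Nonempty ∧ (g.f xy.2).Nonempty then
      (Sum.inl '' f.f xy.1) ∪ (Sum.inr '' g.f xy.2)
    else ∅

/-- The join `f ⊞ g : ⊆ X₀ ⊔ X₁ ⇉ Ŷ₀ × Ŷ₁`, with `(f ⊞ g)(⟨0,x⟩) = f(x) × Ŷ₁` and
`(f ⊞ g)(⟨1,x⟩) = Ŷ₀ × g(x)`. -/
def boxplus (f g : MFn) : MFn where
  A := f.A.sum g.A
  B := (f.B.hat).prod (g.B.hat)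
  f := Sum.elim
    (fun x => (Option.some '' f.f x) ×ˢ (Set.univ : Set (Option g.B.X)))
    (fun y => (Set.univ : Set (Option f.B.X)) ×ˢ (Option.some '' g.f y))

end MFn

/-- `F ⊢ f`: the partial function `F : ⊆ 2^ω → 2^ω` is a realizer of `f`, i.e.
`δ_Y F(p) ∈ f δ_X(p)` for every `p ∈ dom(f δ_X)`. -/
def Realizes (F : Cantor →. Cantor) (f : MFn) : Prop :=
  ∀ p x, x ∈ f.A.δ p → (f.f x).Nonempty →
    ∃ q ∈ F p, ∃ y ∈ f.B.δ q, y ∈ f.f x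

/-- Composition of partial functions on Cantor space: `pcomp F G = F ∘ G`. -/
def pcomp (F G : Cantor →. Cantor) : Cantor →. Cantor := fun p => (G p).bind F

/-- Strong Weihrauch reducibility: `f ≤_sW g` iff there are Turing functionals `Φ, Ψ` with
`Ψ G Φ ⊢ f` for every `G ⊢ g`. -/
def sWLe (f g : MFn) : Prop :=
  ∃ Φ Ψ : TuringFunctional, ∀ G : Cantor →. Cantor, Realizes G g →
    Realizes (pcomp Ψ.eval (pcomp G Φ.eval)) f

/-- Strong Weihrauch equivalence. -/
def sWEq (f g : MFn) : Prop := sWLe f g ∧ sWLe g f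

/-- Weihrauch reducibility: `f ≤_W g` iff there are Turing functionals `Φ, Ψ` with
`Ψ⟨id, G Φ⟩ ⊢ f` for every `G ⊢ g`. -/
def wLe (f g : MFn) : Prop :=
  ∃ Φ Ψ : TuringFunctional, ∀ G : Cantor →. Cantor, Realizes G g →
    Realizes (fun p => (pcomp G Φ.eval p).bind fun q => Ψ.eval (pairC p q)) f

/-- Weihrauch equivalence. -/
def wEq (f g : MFn) : Prop := wLe f g ∧ wLe g f

/-- Cantor space as a represented space, with the identity representation. -/
def CantorSp : RepSp where
  X := Cantor
  δ := fun p => Part.some p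
  surj := fun p => ⟨p, Part.mem_some_iff.mpr rfl⟩

/-- A partial multifunction on Cantor space, viewed as a multifunction on represented
spaces via the identity representation. -/
def ofCantor (F : Cantor → Set Cantor) : MFn := ⟨CantorSp, CantorSp, F⟩

/-! ### Further definitions used in the statements -/

/-- `c` is an index for the Turing functional `Ψ`. -/
def codesTF (c : Nat.Partrec.Code) (Ψ : TuringFunctional) : Prop :=
  ∀ (σ : List Bool) (n : ℕ),
    c.eval (Nat.pair (Encodable.encode σ) n) = Part.some (Encodable.encode (Ψ.approx σ n))

/-- The multifunction `h` of Lemma 4.4: `h(⟨0,p⟩)` consists of all pairs `⟨a,q⟩` where `a`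
is a total monotone approximation with `e(a) ∈ F(p)`, and `h(⟨1,p⟩)` of all pairs `⟨q,a⟩`
where `a` is a total monotone approximation with `e(a) ∈ G(p)`. -/
def hJoin (F G : Cantor → Set Cantor) : Cantor → Set Cantor := fun r =>
  {z | leftC r = natSet 0 ∧
    ∃ a q, z = pairC a q ∧ TotalMonotoneApprox a ∧ eVal a ∈ F (rightC r)} ∪
  {z | leftC r = natSet 1 ∧
    ∃ q a, z = pairC q a ∧ TotalMonotoneApprox a ∧ eVal a ∈ G (rightC r)}

/-- A single-valued partial function on Cantor space, viewed as a partial multifunction on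
represented spaces (via the identity representation). -/
def pfnToM (F : Cantor →. Cantor) : MFn := ofCantor fun p => {q | q ∈ F p}

/-- The single-point partial function `{p} → {q}`. -/
def singleFn (p q : Cantor) : MFn := ofCantor fun r => if r = p then {q} else ∅

/-- `A` is Medvedev reducible to `B`. -/
def MedvedevLe (A B : Set Cantor) : Prop :=
  ∃ Φ : TuringFunctional, ∀ p ∈ B, ∃ q ∈ Φ.eval p, q ∈ A

/-- The all-zero sequence `0^ω`. -/
def zeroSeq : Cantor := fun _ => false

/-- `d_A : A → {0^ω}`. -/
def dFn (A : Set Cantor) : MFn := ofCantor fun p => if p ∈ A then {zeroSeq} else ∅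

/-- `A ⊔ B ⊆ 2^ω`: all `⟨i,p⟩` with `i < 2` and `p ∈ A` if `i = 0`, `p ∈ B` if `i = 1`. -/
def setSum (A B : Set Cantor) : Set Cantor :=
  {r | ∃ p ∈ A, r = inC 0 p} ∪ {r | ∃ p ∈ B, r = inC 1 p}

/-- `A × B ⊆ 2^ω`: all pairs `⟨p,q⟩` with `p ∈ A` and `q ∈ B`. -/
def setProd (A B : Set Cantor) : Set Cantor := {r | ∃ p ∈ A, ∃ q ∈ B, r = pairC p q}

/-- `p` is a name of an instance of `f`. -/
def domName (f : MFn) (p : Cantor) : Prop := ∃ x ∈ f.A.δ p, (f.f x).Nonempty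

/-- `q` is a name of a solution to the instance of `f` named by `p`. -/
def solName (f : MFn) (p q : Cantor) : Prop :=
  ∃ x ∈ f.A.δ p, ∃ y ∈ f.B.δ q, y ∈ f.f x

/-- Strong computable reducibility `f ≤_sc g`: every name `p` of an instance of `f`
computes a name `p'` of an instance of `g` such that every name of a solution to the
latter computes a name of a solution to the former. -/
def scLe (f g : MFn) : Prop :=
  ∀ p, domName f p → ∃ p', TuringLe p' p ∧ domName g p' ∧
    ∀ q, solName g p' q → ∃ z, TuringLe z q ∧ solName f p z

/-- Strong computable equivalence. -/
def scEq (f g : MFn) : Prop := scLe f g ∧ scLe g f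

/-! ### Auxiliary material for Proposition 3.11 -/

section StmtAux

/-! #### Basic facts about `initSeg`, prefixes, and `Nat` booleans -/

lemma initSeg_length (p : Cantor) (s : ℕ) : (initSeg p s).length = s := by
  simp [initSeg]

lemma initSeg_getElem? (p : Cantor) {n s : ℕ} (h : n < s) :
    (initSeg p s)[n]? = some (p n) := by
  simp [initSeg, List.getElem?_map, List.getElem?_range h]

lemma initSeg_getD (p : Cantor) {n s : ℕ} (h : n < s) :
    (initSeg p s).getD n false = p n := by
  rw [List.getD_eq_getElem?_getD, initSeg_getElem? p h]; rfl

lemma initSeg_prefix (p : Cantor) {s t : ℕ} (h : s ≤ t) :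
    initSeg p s <+: initSeg p t := by
  have he : initSeg p s = (initSeg p t).take s := by
    simp [initSeg, List.take_range, ← List.map_take, Nat.min_eq_left h]
  rw [he]; exact List.take_prefix _ _

lemma prefix_getD {σ τ : List Bool} (h : σ <+: τ) {n : ℕ} (hn : n < σ.length) :
    τ.getD n false = σ.getD n false := by
  obtain ⟨t, rfl⟩ := h
  rw [List.getD_eq_getElem?_getD, List.getD_eq_getElem?_getD,
    List.getElem?_append_left hn]

lemma blt_true {x y : ℕ} (h : x < y) : Nat.blt x y = true := by
  rw [Nat.blt_eq]; exact h

lemma blt_lt {x y : ℕ} (h : Nat.blt x y = true) : x < y := by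
  rwa [Nat.blt_eq] at h

lemma beq_true {x y : ℕ} (h : x = y) : Nat.beq x y = true := by
  rw [Nat.beq_eq]; exact h

lemma beq_eq' {x y : ℕ} (h : Nat.beq x y = true) : x = y := by
  rwa [Nat.beq_eq] at h

lemma beq_false {x y : ℕ} (h : x ≠ y) : Nat.beq x y = false := by
  cases hb : Nat.beq x y
  · rfl
  · exact absurd (beq_eq' hb) h

lemma bool_fc (b : Bool) : b = false ∨ b = true := by
  cases b
  · exact Or.inl rfl
  · exact Or.inr rfl

lemma cond_bit (bv : Bool) : (bif bv then (1 : ℕ) else 0) = bv.toNat := by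
  cases bv <;> rfl

lemma primrec₂_beq : Primrec₂ Nat.beq :=
  Primrec₂.of_eq (Primrec.eq (α := ℕ)).decide fun a b => by
    rw [Bool.eq_iff_iff]; simp [Nat.beq_eq]

lemma primrec₂_blt : Primrec₂ Nat.blt :=
  Primrec₂.of_eq (Primrec.nat_lt).decide fun a b => by
    rw [Bool.eq_iff_iff]; simp [Nat.blt_eq]

/-! #### The evaluation of a Turing functional -/

lemma TuringFunctional.approx_agree (Φ : TuringFunctional) {p : Cantor} {n s t : ℕ}
    {b b' : Bool} (h1 : Φ.approx (initSeg p s) n = some b)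
    (h2 : Φ.approx (initSeg p t) n = some b') : b = b' := by
  rcases le_total s t with h | h
  · have h3 := Φ.mono _ _ _ _ (initSeg_prefix p h) h1
    rw [h3] at h2; exact Option.some.inj h2
  · have h3 := Φ.mono _ _ _ _ (initSeg_prefix p h) h2
    rw [h3] at h1; exact (Option.some.inj h1).symm

lemma TuringFunctional.eval_eq_some (Φ : TuringFunctional) {p z : Cantor}
    (h : ∀ n, ∃ s, Φ.approx (initSeg p s) n = some (z n)) :
    Φ.eval p = Part.some z := by
  rw [Part.eq_some_iff]
  have hdom : ∀ n, ∃ s b, Φ.approx (initSeg p s) n = some b :=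
    fun n => ⟨(h n).choose, z n, (h n).choose_spec⟩
  refine ⟨hdom, funext fun n => ?_⟩
  exact Φ.approx_agree (hdom n).choose_spec.choose_spec (h n).choose_spec

/-! #### The identity Turing functional -/

def idTF : TuringFunctional where
  approx σ n := σ[n]?
  computable := Primrec₂.to_comp Primrec.list_getElem?
  mono := by
    intro σ τ n b h hb
    obtain ⟨t, rfl⟩ := h
    have hb' : σ[n]? = some b := hb
    have hn : n < σ.length := by
      by_contra hn
      rw [List.getElem?_eq_none (Nat.le_of_not_lt hn)] at hb'
      cases hb'
    show (σ ++ t)[n]? = some b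
    rwa [List.getElem?_append_left hn]

lemma idTF_eval (p : Cantor) : idTF.eval p = Part.some p :=
  idTF.eval_eq_some fun n => ⟨n + 1, initSeg_getElem? p (Nat.lt_succ_self n)⟩

lemma pcomp_id_mem {G : Cantor →. Cantor} {p q : Cantor} (h : q ∈ G p) :
    q ∈ pcomp G idTF.eval p := by
  show q ∈ (idTF.eval p).bind G
  rw [idTF_eval]
  exact Part.mem_bind_iff.mpr ⟨p, Part.mem_some p, h⟩

/-! #### Bitwise descriptions of `maEncode` and `badMA` -/

lemma maEncode_bit (q : Cantor) (k : ℕ) :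
    maEncode q k = (bif Nat.beq k.unpair.2.unpair.1 k.unpair.1
      then Nat.beq k.unpair.2.unpair.2 (q k.unpair.1).toNat else false) := by
  rw [Bool.eq_iff_iff]
  constructor
  · intro h
    obtain ⟨n, rfl⟩ := maEncode_mem.mp h
    simp [tpl, Nat.unpair_pair, beq_true]
  · intro h
    rcases bool_fc (Nat.beq k.unpair.2.unpair.1 k.unpair.1) with hb | hb
    · rw [hb, cond_false] at h; exact absurd h (by simp)
    · rw [hb, cond_true] at h
      have e1 := beq_eq' hb
      have e2 := beq_eq' h
      refine maEncode_mem.mpr ⟨k.unpair.1, ?_⟩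
      have hstep : tpl k.unpair.1 k.unpair.1 (q k.unpair.1).toNat
          = Nat.pair k.unpair.1 (Nat.pair k.unpair.2.unpair.1 k.unpair.2.unpair.2) := by
        rw [e1, e2]; rfl
      rw [hstep, Nat.pair_unpair, Nat.pair_unpair]

lemma badMA_bit (k : ℕ) :
    badMA k = (bif Nat.beq k (tpl 0 0 0) then true else Nat.beq k (tpl 0 1 0)) := by
  rw [Bool.eq_iff_iff]
  unfold badMA
  rcases bool_fc (Nat.beq k (tpl 0 0 0)) with hb | hb
  case inr => simp [beq_eq' hb]
  case inl =>
    have hk : k ≠ tpl 0 0 0 := fun e => by rw [beq_true e] at hb; exact Bool.noConfusion hb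
    rw [hb]
    simp only [cond_false, Nat.beq_eq, decide_eq_true_eq]
    constructor
    · rintro (rfl | rfl)
      · exact absurd rfl hk
      · rfl
    · intro h; exact Or.inr h

lemma pairC_even (x y : Cantor) {m : ℕ} (h : m % 2 = 0) : pairC x y m = x (m / 2) := by
  simp [pairC, h]

lemma pairC_odd (x y : Cantor) {m : ℕ} (h : m % 2 = 1) : pairC x y m = y (m / 2) := by
  simp [pairC, h]

/-! #### The Turing functional `Ψ` for `f ⊞ g ≤ f ⊔ g` -/

def psi1Approx (a b c : ℕ) (σ : List Bool) (m : ℕ) : Option Bool :=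
  bif Nat.blt c σ.length then
    bif Nat.beq (m % 2) (bif σ.getD c false then 0 else 1) then
      bif Nat.blt (a * (m / 2).unpair.1 + b) σ.length then
        some (bif Nat.beq (m / 2).unpair.2.unpair.1 (m / 2).unpair.1 then
          Nat.beq (m / 2).unpair.2.unpair.2
            (bif σ.getD (a * (m / 2).unpair.1 + b) false then 1 else 0)
          else false)
      else none
    else some (bif Nat.beq (m / 2) (tpl 0 0 0) then true else Nat.beq (m / 2) (tpl 0 1 0))
  else none

lemma psi1Approx_primrec (a b c : ℕ) : Primrec₂ (psi1Approx a b c) := by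
  have hσ : Primrec fun p : List Bool × ℕ => p.1 := Primrec.fst
  have hm : Primrec fun p : List Bool × ℕ => p.2 := Primrec.snd
  have hlen : Primrec fun p : List Bool × ℕ => p.1.length := Primrec.list_length.comp hσ
  have hk : Primrec fun p : List Bool × ℕ => p.2 / 2 :=
    Primrec.nat_div.comp hm (Primrec.const 2)
  have hk2 : Primrec fun p : List Bool × ℕ => (p.2 / 2).unpair.2 :=
    Primrec.snd.comp (Primrec.unpair.comp hk)
  have hn : Primrec fun p : List Bool × ℕ => (p.2 / 2).unpair.1 :=
    Primrec.fst.comp (Primrec.unpair.comp hk)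
  have hs' : Primrec fun p : List Bool × ℕ => (p.2 / 2).unpair.2.unpair.1 :=
    Primrec.fst.comp (Primrec.unpair.comp hk2)
  have hi' : Primrec fun p : List Bool × ℕ => (p.2 / 2).unpair.2.unpair.2 :=
    Primrec.snd.comp (Primrec.unpair.comp hk2)
  have hpos : Primrec fun p : List Bool × ℕ => a * (p.2 / 2).unpair.1 + b :=
    Primrec.nat_add.comp (Primrec.nat_mul.comp (Primrec.const a) hn) (Primrec.const b)
  have hgc : Primrec fun p : List Bool × ℕ => p.1.getD c false :=
    (Primrec.list_getD false).comp hσ (Primrec.const c)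
  have hgp : Primrec fun p : List Bool × ℕ => p.1.getD (a * (p.2 / 2).unpair.1 + b) false :=
    (Primrec.list_getD false).comp hσ hpos
  have hj : Primrec fun p : List Bool × ℕ => (bif p.1.getD c false then (0 : ℕ) else 1) :=
    Primrec.cond hgc (Primrec.const 0) (Primrec.const 1)
  have hmod : Primrec fun p : List Bool × ℕ => p.2 % 2 :=
    Primrec.nat_mod.comp hm (Primrec.const 2)
  have hc1 : Primrec fun p : List Bool × ℕ => Nat.blt c p.1.length :=
    primrec₂_blt.comp (Primrec.const c) hlen
  have hc2 : Primrec fun p : List Bool × ℕ =>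
      Nat.beq (p.2 % 2) (bif p.1.getD c false then 0 else 1) :=
    primrec₂_beq.comp hmod hj
  have hc3 : Primrec fun p : List Bool × ℕ =>
      Nat.blt (a * (p.2 / 2).unpair.1 + b) p.1.length :=
    primrec₂_blt.comp hpos hlen
  have hval1 : Primrec fun p : List Bool × ℕ =>
      (bif Nat.beq (p.2 / 2).unpair.2.unpair.1 (p.2 / 2).unpair.1 then
        Nat.beq (p.2 / 2).unpair.2.unpair.2
          (bif p.1.getD (a * (p.2 / 2).unpair.1 + b) false then 1 else 0)
        else false) :=
    Primrec.cond (primrec₂_beq.comp hs' hn)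
      (primrec₂_beq.comp hi' (Primrec.cond hgp (Primrec.const 1) (Primrec.const 0)))
      (Primrec.const false)
  have hval2 : Primrec fun p : List Bool × ℕ =>
      (bif Nat.beq (p.2 / 2) (tpl 0 0 0) then true else Nat.beq (p.2 / 2) (tpl 0 1 0)) :=
    Primrec.cond (primrec₂_beq.comp hk (Primrec.const (tpl 0 0 0))) (Primrec.const true)
      (primrec₂_beq.comp hk (Primrec.const (tpl 0 1 0)))
  exact (Primrec.cond hc1
    (Primrec.cond hc2
      (Primrec.cond hc3 (Primrec.option_some.comp hval1) (Primrec.const none))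
      (Primrec.option_some.comp hval2))
    (Primrec.const none)).of_eq fun p => by unfold psi1Approx; rfl

lemma psi1Approx_mono (a b c : ℕ) {σ τ : List Bool} {m : ℕ} {r : Bool}
    (hpre : σ <+: τ) (hb : psi1Approx a b c σ m = some r) :
    psi1Approx a b c τ m = some r := by
  have hlen : σ.length ≤ τ.length := hpre.length_le
  unfold psi1Approx at hb ⊢
  rcases bool_fc (Nat.blt c σ.length) with h1 | h1
  · rw [h1, cond_false] at hb; exact absurd hb (by simp)
  · rw [h1, cond_true] at hb
    have hc : c < σ.length := blt_lt h1
    rw [blt_true (lt_of_lt_of_le hc hlen), cond_true, prefix_getD hpre hc]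
    rcases bool_fc
        (Nat.beq (m % 2) (bif σ.getD c false then 0 else 1)) with h2 | h2
    · rw [h2, cond_false] at hb ⊢; exact hb
    · rw [h2, cond_true] at hb ⊢
      rcases bool_fc
          (Nat.blt (a * (m / 2).unpair.1 + b) σ.length) with h3 | h3
      · rw [h3, cond_false] at hb; exact absurd hb (by simp)
      · rw [h3, cond_true] at hb
        have hp : a * (m / 2).unpair.1 + b < σ.length := blt_lt h3
        rw [blt_true (lt_of_lt_of_le hp hlen), cond_true, prefix_getD hpre hp]
        exact hb

def psi1TF (a b c : ℕ) : TuringFunctional where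
  approx := psi1Approx a b c
  computable := (psi1Approx_primrec a b c).to_comp
  mono := fun _ _ _ _ h hb => psi1Approx_mono a b c h hb

lemma psi1_eval (a b c : ℕ) (r : Cantor) (jj : ℕ)
    (hc : (bif r c then (0 : ℕ) else 1) = jj) :
    (psi1TF a b c).eval r = Part.some (fun m =>
      bif Nat.beq (m % 2) jj then maEncode (fun n => r (a * n + b)) (m / 2)
      else badMA (m / 2)) := by
  apply TuringFunctional.eval_eq_some
  intro m
  refine ⟨a * (m / 2).unpair.1 + b + c + 1, ?_⟩
  set s := a * (m / 2).unpair.1 + b + c + 1 with hs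
  have hcs : c < s := by omega
  have hps : a * (m / 2).unpair.1 + b < s := by omega
  show psi1Approx a b c (initSeg r s) m = _
  unfold psi1Approx
  rw [initSeg_length, blt_true hcs, cond_true, initSeg_getD r hcs, hc,
    blt_true hps, initSeg_getD r hps]
  rcases bool_fc (Nat.beq (m % 2) jj) with hpar | hpar
  · rw [hpar]
    simp only [cond_false]
    congr 1
    exact (badMA_bit (m / 2)).symm
  · rw [hpar]
    simp only [cond_true]
    congr 1
    rw [maEncode_bit, cond_bit]

lemma psi1_eval0 (a b c : ℕ) (r : Cantor) (h0 : r c = true) :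
    (psi1TF a b c).eval r =
      Part.some (pairC (maEncode fun n => r (a * n + b)) badMA) := by
  rw [psi1_eval a b c r 0 (by rw [h0]; rfl)]
  congr 1
  funext m
  by_cases h : m % 2 = 0
  · rw [beq_true h, cond_true, pairC_even _ _ h]
  · rw [beq_false h, cond_false, pairC_odd _ _ (by omega)]

lemma psi1_eval1 (a b c : ℕ) (r : Cantor) (h0 : r c = false) :
    (psi1TF a b c).eval r =
      Part.some (pairC badMA (maEncode fun n => r (a * n + b))) := by
  rw [psi1_eval a b c r 1 (by rw [h0]; rfl)]
  congr 1
  funext m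
  by_cases h : m % 2 = 1
  · rw [beq_true h, cond_true, pairC_odd _ _ h]
  · rw [beq_false h, cond_false, pairC_even _ _ (by omega)]

/-! #### The Turing functional `Ψ` for `f ⊔ g ≤ f ⊞ g` -/

def psi2Pred (σ : List Bool) (i j k : ℕ) : Bool :=
  bif Nat.blt (4 * k + 2 * i + 1) σ.length then
    (bif σ.getD (4 * k + 2 * i + 1) false then Nat.beq k.unpair.1 j else false)
  else false

def psi2Approx (σ : List Bool) (m : ℕ) : Option Bool :=
  bif Nat.blt 0 σ.length then
    bif Nat.beq (m % 2) 0 then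
      some (Nat.beq (m / 2) (bif σ.getD 0 false then 0 else 1))
    else
      bif Nat.blt (List.findIdx (psi2Pred σ (bif σ.getD 0 false then 0 else 1) (m / 2))
          (List.range σ.length)) σ.length then
        some (Nat.beq (List.findIdx (psi2Pred σ (bif σ.getD 0 false then 0 else 1) (m / 2))
          (List.range σ.length)).unpair.2.unpair.2 1)
      else none
  else none

lemma psi2Approx_primrec : Primrec₂ psi2Approx := by
  have hσ : Primrec fun p : List Bool × ℕ => p.1 := Primrec.fst
  have hm : Primrec fun p : List Bool × ℕ => p.2 := Primrec.snd
  have hlen : Primrec fun p : List Bool × ℕ => p.1.length := Primrec.list_length.comp hσ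
  have hg0 : Primrec fun p : List Bool × ℕ => p.1.getD 0 false :=
    (Primrec.list_getD false).comp hσ (Primrec.const 0)
  have hi : Primrec fun p : List Bool × ℕ => (bif p.1.getD 0 false then (0 : ℕ) else 1) :=
    Primrec.cond hg0 (Primrec.const 0) (Primrec.const 1)
  have hk : Primrec fun p : List Bool × ℕ => p.2 / 2 :=
    Primrec.nat_div.comp hm (Primrec.const 2)
  have hmod : Primrec fun p : List Bool × ℕ => p.2 % 2 :=
    Primrec.nat_mod.comp hm (Primrec.const 2)
  -- the predicate, on pairs ((σ, m), k)
  have hσ' : Primrec fun q : (List Bool × ℕ) × ℕ => q.1.1 := Primrec.fst.comp Primrec.fst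
  have hk' : Primrec fun q : (List Bool × ℕ) × ℕ => q.2 := Primrec.snd
  have hlen' : Primrec fun q : (List Bool × ℕ) × ℕ => q.1.1.length :=
    Primrec.list_length.comp hσ'
  have hi' : Primrec fun q : (List Bool × ℕ) × ℕ =>
      (bif q.1.1.getD 0 false then (0 : ℕ) else 1) :=
    Primrec.cond ((Primrec.list_getD false).comp hσ' (Primrec.const 0))
      (Primrec.const 0) (Primrec.const 1)
  have hj' : Primrec fun q : (List Bool × ℕ) × ℕ => q.1.2 / 2 :=
    Primrec.nat_div.comp (Primrec.snd.comp Primrec.fst) (Primrec.const 2)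
  have hpos' : Primrec fun q : (List Bool × ℕ) × ℕ =>
      4 * q.2 + 2 * (bif q.1.1.getD 0 false then (0 : ℕ) else 1) + 1 :=
    Primrec.nat_add.comp
      (Primrec.nat_add.comp (Primrec.nat_mul.comp (Primrec.const 4) hk')
        (Primrec.nat_mul.comp (Primrec.const 2) hi'))
      (Primrec.const 1)
  have hpred : Primrec₂ fun (p : List Bool × ℕ) (k : ℕ) =>
      psi2Pred p.1 (bif p.1.getD 0 false then 0 else 1) (p.2 / 2) k := by
    have : Primrec fun q : (List Bool × ℕ) × ℕ =>
        psi2Pred q.1.1 (bif q.1.1.getD 0 false then 0 else 1) (q.1.2 / 2) q.2 := by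
      unfold psi2Pred
      exact Primrec.cond (primrec₂_blt.comp hpos' hlen')
        (Primrec.cond ((Primrec.list_getD false).comp hσ' hpos')
          (primrec₂_beq.comp
            (Primrec.fst.comp (Primrec.unpair.comp hk')) hj')
          (Primrec.const false))
        (Primrec.const false)
    exact this
  have hfind : Primrec fun p : List Bool × ℕ =>
      List.findIdx (psi2Pred p.1 (bif p.1.getD 0 false then 0 else 1) (p.2 / 2))
        (List.range p.1.length) :=
    Primrec.list_findIdx (Primrec.list_range.comp hlen) hpred
  have hout : Primrec fun p : List Bool × ℕ =>
      (List.findIdx (psi2Pred p.1 (bif p.1.getD 0 false then 0 else 1) (p.2 / 2))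
        (List.range p.1.length)).unpair.2.unpair.2 :=
    Primrec.snd.comp (Primrec.unpair.comp
      (Primrec.snd.comp (Primrec.unpair.comp hfind)))
  exact (Primrec.cond (primrec₂_blt.comp (Primrec.const 0) hlen)
    (Primrec.cond (primrec₂_beq.comp hmod (Primrec.const 0))
      (Primrec.option_some.comp (primrec₂_beq.comp hk hi))
      (Primrec.cond (primrec₂_blt.comp hfind hlen)
        (Primrec.option_some.comp (primrec₂_beq.comp hout (Primrec.const 1)))
        (Primrec.const none)))
    (Primrec.const none)).of_eq fun p => by unfold psi2Approx; rfl

lemma psi2Pred_true_iff {σ : List Bool} {i j k : ℕ} :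
    psi2Pred σ i j k = true ↔
      4 * k + 2 * i + 1 < σ.length ∧ σ.getD (4 * k + 2 * i + 1) false = true ∧
        k.unpair.1 = j := by
  unfold psi2Pred
  rcases bool_fc (Nat.blt (4 * k + 2 * i + 1) σ.length) with h1 | h1
  · rw [h1, cond_false]
    constructor
    · intro h; exact absurd h (by simp)
    · rintro ⟨h, -, -⟩; rw [blt_true h] at h1; exact Bool.noConfusion h1
  · rw [h1, cond_true]
    rcases bool_fc (σ.getD (4 * k + 2 * i + 1) false) with h2 | h2
    · rw [h2, cond_false]
      constructor
      · intro h; exact absurd h (by simp)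
      · rintro ⟨-, h, -⟩; simp at h
    · rw [h2, cond_true]
      simp only [Nat.beq_eq]
      constructor
      · intro h
        refine ⟨blt_lt h1, ?_, h⟩
        trivial
      · intro h
        exact h.2.2

lemma psi2Approx_mono {σ τ : List Bool} {m : ℕ} {r : Bool}
    (hpre : σ <+: τ) (hb : psi2Approx σ m = some r) : psi2Approx τ m = some r := by
  have hlen : σ.length ≤ τ.length := hpre.length_le
  unfold psi2Approx at hb ⊢
  rcases bool_fc (Nat.blt 0 σ.length) with h1 | h1
  · rw [h1, cond_false] at hb; exact absurd hb (by simp)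
  · rw [h1, cond_true] at hb
    have h0 : 0 < σ.length := blt_lt h1
    rw [blt_true (lt_of_lt_of_le h0 hlen), cond_true, prefix_getD hpre h0]
    rcases bool_fc (Nat.beq (m % 2) 0) with h2 | h2
    case inr => rw [h2, cond_true] at hb ⊢; exact hb
    case inl =>
      rw [h2, cond_false] at hb ⊢
      set i := (bif σ.getD 0 false then (0 : ℕ) else 1) with hidef
      set K := List.findIdx (psi2Pred σ i (m / 2)) (List.range σ.length) with hK
      rcases bool_fc (Nat.blt K σ.length) with h3 | h3
      case inl => rw [h3, cond_false] at hb; exact absurd hb (by simp)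
      case inr =>
        rw [h3, cond_true] at hb
        have hKlt : K < σ.length := blt_lt h3
        have hKlen : K < (List.range σ.length).length := by simpa using hKlt
        obtain ⟨hptrue, hmin⟩ :=
          (List.findIdx_eq (xs := List.range σ.length)
            (p := psi2Pred σ i (m / 2)) hKlen).mp hK.symm
        rw [List.getElem_range] at hptrue
        obtain ⟨hposK, hbitK, hu1K⟩ := psi2Pred_true_iff.mp hptrue
        -- the predicate over τ agrees below K and at K
        have hptrue' : psi2Pred τ i (m / 2) K = true :=
          psi2Pred_true_iff.mpr
            ⟨lt_of_lt_of_le hposK hlen, by rw [prefix_getD hpre hposK]; exact hbitK, hu1K⟩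
        have hmin' : ∀ j, j < K → psi2Pred τ i (m / 2) j = false := by
          intro j hj
          rcases bool_fc (psi2Pred τ i (m / 2) j) with hpj | hpj
          case inl => exact hpj
          case inr =>
            obtain ⟨hpj1, hpj2, hpj3⟩ := psi2Pred_true_iff.mp hpj
            have hpjσ : 4 * j + 2 * i + 1 < σ.length := by omega
            have : psi2Pred σ i (m / 2) j = true :=
              psi2Pred_true_iff.mpr
                ⟨hpjσ, by rw [← prefix_getD hpre hpjσ]; exact hpj2, hpj3⟩
            have hfalse := hmin j hj
            rw [List.getElem_range] at hfalse
            rw [this] at hfalse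
            exact Bool.noConfusion hfalse
        have hKτ : K < τ.length := lt_of_lt_of_le hKlt hlen
        have hfindτ : List.findIdx (psi2Pred τ i (m / 2)) (List.range τ.length) = K := by
          rw [List.findIdx_eq (by simpa using hKτ)]
          constructor
          · rw [List.getElem_range]; exact hptrue'
          · intro j hj; rw [List.getElem_range]; exact hmin' j hj
        rw [hfindτ, blt_true hKτ, cond_true]
        exact hb

def psi2TF : TuringFunctional where
  approx := psi2Approx
  computable := psi2Approx_primrec.to_comp
  mono := fun _ _ _ _ h hb => psi2Approx_mono h hb

set_option maxHeartbeats 1000000 in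
lemma psi2_eval (r : Cantor) (ii : ℕ)
    (hc : (bif r 0 then (0 : ℕ) else 1) = ii)
    (hT : TotalMonotoneApprox fun k => r (4 * k + 2 * ii + 1)) :
    psi2TF.eval r = Part.some (inC ii (eVal fun k => r (4 * k + 2 * ii + 1))) := by
  set av : Cantor := fun k => r (4 * k + 2 * ii + 1) with hav
  apply TuringFunctional.eval_eq_some
  intro m
  by_cases hpar : m % 2 = 0
  · refine ⟨1, ?_⟩
    show psi2Approx (initSeg r 1) m = _
    unfold psi2Approx
    rw [initSeg_length, blt_true (by omega : (0:ℕ) < 1), cond_true,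
      initSeg_getD r (by omega : (0:ℕ) < 1), hc, beq_true hpar, cond_true]
    congr 1
    rw [show inC ii (eVal av) m = natSet ii (m / 2) from pairC_even _ _ hpar]
    rw [Bool.eq_iff_iff]
    simp [natSet, Nat.beq_eq]
  · have hodd : m % 2 = 1 := by omega
    obtain ⟨s0, b0, hb0lt, hb0⟩ := hT.2 (m / 2)
    set k0 := tpl (m / 2) s0 b0 with hk0
    refine ⟨4 * k0 + 2 * ii + 2, ?_⟩
    set s := 4 * k0 + 2 * ii + 2 with hsdef
    show psi2Approx (initSeg r s) m = _
    unfold psi2Approx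
    have h0s : (0:ℕ) < s := by omega
    rw [initSeg_length, blt_true h0s, cond_true, initSeg_getD r h0s, hc,
      beq_false hpar, cond_false]
    have hk0u1 : k0.unpair.1 = m / 2 := by
      rw [hk0]; show (Nat.pair (m / 2) (Nat.pair s0 b0)).unpair.1 = m / 2
      rw [Nat.unpair_pair]
    have hk0u22 : k0.unpair.2.unpair.2 = b0 := by
      rw [hk0]; show (Nat.pair (m / 2) (Nat.pair s0 b0)).unpair.2.unpair.2 = b0
      rw [Nat.unpair_pair]; rw [Nat.unpair_pair]
    have hk0lt : k0 < s := by omega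
    have hk0len : k0 < (List.range s).length := by simpa using hk0lt
    have hfind : List.findIdx (psi2Pred (initSeg r s) ii (m / 2)) (List.range s) = k0 := by
      rw [List.findIdx_eq hk0len]
      constructor
      · rw [List.getElem_range]
        refine psi2Pred_true_iff.mpr ⟨?_, ?_, hk0u1⟩
        · rw [initSeg_length]; omega
        · rw [initSeg_getD r (by omega : 4 * k0 + 2 * ii + 1 < s)]
          exact hb0
      · intro j hj
        rw [List.getElem_range]
        rcases bool_fc (psi2Pred (initSeg r s) ii (m / 2) j) with hpj | hpj
        case inl => exact hpj
        case inr =>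
          exfalso
          obtain ⟨-, hpj2, hpj3⟩ := psi2Pred_true_iff.mp hpj
          rw [initSeg_getD r (by omega : 4 * j + 2 * ii + 1 < s)] at hpj2
          -- `av j = true` with first coordinate `m / 2`, so `j = k0` by uniqueness
          have haj : av (tpl (m / 2) j.unpair.2.unpair.1 j.unpair.2.unpair.2) = true := by
            have hje : j = tpl (m / 2) j.unpair.2.unpair.1 j.unpair.2.unpair.2 := by
              rw [← hpj3]
              show j = Nat.pair j.unpair.1 (Nat.pair j.unpair.2.unpair.1 j.unpair.2.unpair.2)
              rw [Nat.pair_unpair, Nat.pair_unpair]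
            rw [← hje]
            exact hpj2
          obtain ⟨hse, hbe⟩ := hT.1.2.1 (m / 2) _ _ _ _ haj hb0
          have : j = k0 := by
            rw [hk0, ← hse, ← hbe]
            show j = Nat.pair (m / 2) (Nat.pair j.unpair.2.unpair.1 j.unpair.2.unpair.2)
            rw [← hpj3, Nat.pair_unpair, Nat.pair_unpair]
          omega
    rw [hfind, blt_true hk0lt, cond_true]
    congr 1
    rw [show inC ii (eVal av) m = eVal av (m / 2) from pairC_odd _ _ hodd]
    rw [hk0u22, Bool.eq_iff_iff, Nat.beq_eq]
    unfold eVal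
    simp only [decide_eq_true_eq]
    constructor
    · rintro rfl; exact ⟨s0, hb0⟩
    · rintro ⟨s', hs'⟩
      exact ((hT.1.2.1 (m / 2) s' s0 1 b0 hs' hb0).2).symm

/-! #### Names in represented spaces -/

section NameLemmas

lemma natSet_one_ne_zero : natSet 1 ≠ natSet 0 := by
  intro h
  have h0 := congrFun h 0
  simp [natSet] at h0

lemma q0_of_left0 {q : Cantor} (h : leftC q = natSet 0) : q 0 = true := by
  have h0 := congrFun h 0
  simpa [leftC, natSet] using h0

lemma q0_of_left1 {q : Cantor} (h : leftC q = natSet 1) : q 0 = false := by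
  have h0 := congrFun h 0
  simpa [leftC, natSet] using h0

lemma sum_name_cases {A B : RepSp} {r : Cantor} {z : A.X ⊕ B.X}
    (hz : z ∈ (A.sum B).δ r) :
    (leftC r = natSet 0 ∧ ∃ x, z = Sum.inl x ∧ x ∈ A.δ (rightC r)) ∨
    (leftC r = natSet 1 ∧ ∃ y, z = Sum.inr y ∧ y ∈ B.δ (rightC r)) := by
  by_cases h0 : leftC r = natSet 0
  · left
    refine ⟨h0, ?_⟩
    have hz' : z ∈ (A.δ (rightC r)).map Sum.inl := by
      have hz2 : z ∈ (if leftC r = natSet 0 then (A.δ (rightC r)).map Sum.inl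
          else if leftC r = natSet 1 then (B.δ (rightC r)).map Sum.inr else Part.none) := hz
      rwa [if_pos h0] at hz2
    obtain ⟨x, hx, hxz⟩ := (Part.mem_map_iff _).mp hz'
    exact ⟨x, hxz.symm, hx⟩
  · by_cases h1 : leftC r = natSet 1
    · right
      refine ⟨h1, ?_⟩
      have hz' : z ∈ (B.δ (rightC r)).map Sum.inr := by
        have hz2 : z ∈ (if leftC r = natSet 0 then (A.δ (rightC r)).map Sum.inl
          else if leftC r = natSet 1 then (B.δ (rightC r)).map Sum.inr else Part.none) := hz
        rwa [if_neg h0, if_pos h1] at hz2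
      obtain ⟨y, hy, hyz⟩ := (Part.mem_map_iff _).mp hz'
      exact ⟨y, hyz.symm, hy⟩
    · exfalso
      have hz' : z ∈ (Part.none : Part (A.X ⊕ B.X)) := by
        have hz2 : z ∈ (if leftC r = natSet 0 then (A.δ (rightC r)).map Sum.inl
          else if leftC r = natSet 1 then (B.δ (rightC r)).map Sum.inr else Part.none) := hz
        rwa [if_neg h0, if_neg h1] at hz2
      exact Part.notMem_none z hz'

lemma sum_name_inl {A B : RepSp} {p : Cantor} {x : A.X} (hx : x ∈ A.δ p) :
    Sum.inl x ∈ (A.sum B).δ (inC 0 p) := by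
  have e1 : leftC (inC 0 p) = natSet 0 := leftC_pairC _ _
  have e2 : rightC (inC 0 p) = p := rightC_pairC _ _
  show Sum.inl x ∈ (if leftC (inC 0 p) = natSet 0
    then (A.δ (rightC (inC 0 p))).map Sum.inl
    else if leftC (inC 0 p) = natSet 1 then (B.δ (rightC (inC 0 p))).map Sum.inr
    else Part.none)
  rw [e1, e2, if_pos rfl]
  exact Part.mem_map _ hx

lemma sum_name_inr {A B : RepSp} {p : Cantor} {y : B.X} (hy : y ∈ B.δ p) :
    Sum.inr y ∈ (A.sum B).δ (inC 1 p) := by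
  have e1 : leftC (inC 1 p) = natSet 1 := leftC_pairC _ _
  have e2 : rightC (inC 1 p) = p := rightC_pairC _ _
  show Sum.inr y ∈ (if leftC (inC 1 p) = natSet 0
    then (A.δ (rightC (inC 1 p))).map Sum.inl
    else if leftC (inC 1 p) = natSet 1 then (B.δ (rightC (inC 1 p))).map Sum.inr
    else Part.none)
  rw [e1, e2, if_neg natSet_one_ne_zero, if_pos rfl]
  exact Part.mem_map _ hy

lemma hat_name_some {A : RepSp} {p : Cantor} {y : A.X} (ht : TotalMonotoneApprox p)
    (hy : y ∈ A.δ (eVal p)) : (some y : Option A.X) ∈ A.hat.δ p := by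
  show _ ∈ Part.some (((evalMA p).bind A.δ).toOption)
  rw [Part.mem_some_iff, eq_comm, Part.toOption_eq_some_iff]
  exact Part.mem_bind_iff.mpr ⟨eVal p, ⟨ht, rfl⟩, hy⟩

lemma hat_name_none {A : RepSp} : (none : Option A.X) ∈ A.hat.δ badMA := by
  show _ ∈ Part.some (((evalMA badMA).bind A.δ).toOption)
  rw [Part.mem_some_iff, eq_comm, Part.toOption_eq_none_iff]
  rintro ⟨h1, -⟩
  exact badMA_not h1

lemma prod_name {A B : RepSp} {p q : Cantor} {x : A.X} {y : B.X}
    (hx : x ∈ A.δ p) (hy : y ∈ B.δ q) : (x, y) ∈ (A.prod B).δ (pairC p q) := by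
  show (x, y) ∈ (A.δ (leftC (pairC p q))).bind
    fun x => (B.δ (rightC (pairC p q))).map fun y => (x, y)
  rw [leftC_pairC, rightC_pairC]
  exact Part.mem_bind_iff.mpr ⟨x, hx, Part.mem_map _ hy⟩

lemma hat_prod_name_eq {A B : RepSp} {q : Cantor} {y : Option A.X × Option B.X}
    (hy : y ∈ ((A.hat).prod (B.hat)).δ q) :
    y.1 = ((evalMA (leftC q)).bind A.δ).toOption ∧
    y.2 = ((evalMA (rightC q)).bind B.δ).toOption := by
  have hy' : y ∈ (Part.some (((evalMA (leftC q)).bind A.δ).toOption)).bind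
      fun u => (Part.some (((evalMA (rightC q)).bind B.δ).toOption)).map
        fun v => (u, v) := hy
  obtain ⟨u, hu, hv⟩ := Part.mem_bind_iff.mp hy'
  obtain ⟨v, hv1, hv2⟩ := (Part.mem_map_iff _).mp hv
  rw [Part.mem_some_iff] at hu hv1
  rw [← hv2]
  exact ⟨hu, hv1⟩

lemma toOption_some_extract {A : RepSp} {p : Cantor} {y₀ : A.X}
    (h : ((evalMA p).bind A.δ).toOption = some y₀) :
    TotalMonotoneApprox p ∧ y₀ ∈ A.δ (eVal p) := by
  rw [Part.toOption_eq_some_iff] at h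
  obtain ⟨w, hw, hy⟩ := Part.mem_bind_iff.mp h
  obtain ⟨ht, hww⟩ := hw
  exact ⟨ht, by rwa [← hww] at hy⟩

end NameLemmas

/-! #### The three reductions -/

section Reductions

lemma sWLe_boxplus_sqcup (f g : MFn) : sWLe (f.boxplus g) (f.sqcup g) := by
  refine ⟨idTF, psi1TF 2 1 0, ?_⟩
  intro G hG p x hx hne
  cases x with
  | inl x₀ =>
    obtain ⟨yy, hyy⟩ := hne
    simp only [MFn.boxplus, Sum.elim_inl] at hyy
    obtain ⟨hw1, -⟩ := Set.mem_prod.mp hyy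
    rw [Set.mem_image] at hw1
    obtain ⟨w₀, hw₀, -⟩ := hw1
    have hne' : ((f.sqcup g).f (Sum.inl x₀)).Nonempty := by
      refine ⟨Sum.inl w₀, ?_⟩
      simp only [MFn.sqcup, Sum.elim_inl]
      exact Set.mem_image_of_mem _ hw₀
    obtain ⟨q, hqG, y, hyδ, hyf⟩ := hG p (Sum.inl x₀) hx hne'
    simp only [MFn.sqcup, Sum.elim_inl] at hyf
    replace hyf := (Set.mem_image _ _ _).mp hyf
    obtain ⟨y₀, hy₀f, hy₀e⟩ := hyf
    rcases sum_name_cases hyδ with ⟨hL, x', hx'e, hx'δ⟩ | ⟨hL, x', hx'e, -⟩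
    · have hinj : (Sum.inl y₀ : f.B.X ⊕ g.B.X) = Sum.inl x' := by rw [hy₀e, hx'e]
      have hx'y : x' = y₀ := (Sum.inl.inj hinj).symm
      rw [hx'y] at hx'δ
      have heval := psi1_eval0 2 1 0 q (q0_of_left0 hL)
      refine ⟨pairC (maEncode (rightC q)) badMA, ?_,
        (some y₀, (none : Option g.B.X)), ?_, ?_⟩
      · show _ ∈ (pcomp G idTF.eval p).bind (psi1TF 2 1 0).eval
        refine Part.mem_bind_iff.mpr ⟨q, pcomp_id_mem hqG, ?_⟩
        rw [heval]
        exact Part.mem_some _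
      · refine prod_name ?_ hat_name_none
        apply hat_name_some (maEncode_total _)
        rw [eVal_maEncode]
        exact hx'δ
      · simp only [MFn.boxplus, Sum.elim_inl]
        exact Set.mem_prod.mpr ⟨⟨y₀, hy₀f, rfl⟩, Set.mem_univ _⟩
    · rw [hx'e] at hy₀e
      exact absurd hy₀e (by simp)
  | inr x₁ =>
    obtain ⟨yy, hyy⟩ := hne
    simp only [MFn.boxplus, Sum.elim_inr] at hyy
    obtain ⟨-, hw2⟩ := Set.mem_prod.mp hyy
    rw [Set.mem_image] at hw2
    obtain ⟨w₁, hw₁, -⟩ := hw2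
    have hne' : ((f.sqcup g).f (Sum.inr x₁)).Nonempty := by
      refine ⟨Sum.inr w₁, ?_⟩
      simp only [MFn.sqcup, Sum.elim_inr]
      exact Set.mem_image_of_mem _ hw₁
    obtain ⟨q, hqG, y, hyδ, hyf⟩ := hG p (Sum.inr x₁) hx hne'
    simp only [MFn.sqcup, Sum.elim_inr] at hyf
    replace hyf := (Set.mem_image _ _ _).mp hyf
    obtain ⟨y₁, hy₁f, hy₁e⟩ := hyf
    rcases sum_name_cases hyδ with ⟨hL, x', hx'e, -⟩ | ⟨hL, x', hx'e, hx'δ⟩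
    · rw [hx'e] at hy₁e
      exact absurd hy₁e (by simp)
    · have hinj : (Sum.inr y₁ : f.B.X ⊕ g.B.X) = Sum.inr x' := by rw [hy₁e, hx'e]
      have hx'y : x' = y₁ := (Sum.inr.inj hinj).symm
      rw [hx'y] at hx'δ
      have heval := psi1_eval1 2 1 0 q (q0_of_left1 hL)
      refine ⟨pairC badMA (maEncode (rightC q)), ?_,
        ((none : Option f.B.X), some y₁), ?_, ?_⟩
      · show _ ∈ (pcomp G idTF.eval p).bind (psi1TF 2 1 0).eval
        refine Part.mem_bind_iff.mpr ⟨q, pcomp_id_mem hqG, ?_⟩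
        rw [heval]
        exact Part.mem_some _
      · refine prod_name hat_name_none ?_
        apply hat_name_some (maEncode_total _)
        rw [eVal_maEncode]
        exact hx'δ
      · simp only [MFn.boxplus, Sum.elim_inr]
        exact Set.mem_prod.mpr ⟨Set.mem_univ _, ⟨y₁, hy₁f, rfl⟩⟩

lemma wLe_boxplus_sqcup (f g : MFn) : wLe (f.boxplus g) (f.sqcup g) := by
  refine ⟨idTF, psi1TF 4 3 1, ?_⟩
  intro G hG p x hx hne
  have hpq1 : ∀ q : Cantor, pairC p q 1 = q 0 := by
    intro q; simp [pairC]
  have harg : ∀ q : Cantor, (fun n => pairC p q (4 * n + 3)) = rightC q := by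
    intro q
    funext n
    show pairC p q (4 * n + 3) = q (2 * n + 1)
    have h1 : ¬ (4 * n + 3) % 2 = 0 := by omega
    have h2 : (4 * n + 3) / 2 = 2 * n + 1 := by omega
    simp [pairC, h1, h2]
  cases x with
  | inl x₀ =>
    obtain ⟨yy, hyy⟩ := hne
    simp only [MFn.boxplus, Sum.elim_inl] at hyy
    obtain ⟨hw1, -⟩ := Set.mem_prod.mp hyy
    rw [Set.mem_image] at hw1
    obtain ⟨w₀, hw₀, -⟩ := hw1
    have hne' : ((f.sqcup g).f (Sum.inl x₀)).Nonempty := by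
      refine ⟨Sum.inl w₀, ?_⟩
      simp only [MFn.sqcup, Sum.elim_inl]
      exact Set.mem_image_of_mem _ hw₀
    obtain ⟨q, hqG, y, hyδ, hyf⟩ := hG p (Sum.inl x₀) hx hne'
    simp only [MFn.sqcup, Sum.elim_inl] at hyf
    replace hyf := (Set.mem_image _ _ _).mp hyf
    obtain ⟨y₀, hy₀f, hy₀e⟩ := hyf
    rcases sum_name_cases hyδ with ⟨hL, x', hx'e, hx'δ⟩ | ⟨hL, x', hx'e, -⟩
    · have hinj : (Sum.inl y₀ : f.B.X ⊕ g.B.X) = Sum.inl x' := by rw [hy₀e, hx'e]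
      have hx'y : x' = y₀ := (Sum.inl.inj hinj).symm
      rw [hx'y] at hx'δ
      have heval := psi1_eval0 4 3 1 (pairC p q)
        (by rw [hpq1 q]; exact q0_of_left0 hL)
      rw [harg q] at heval
      refine ⟨pairC (maEncode (rightC q)) badMA, ?_,
        (some y₀, (none : Option g.B.X)), ?_, ?_⟩
      · show _ ∈ (pcomp G idTF.eval p).bind fun q' => (psi1TF 4 3 1).eval (pairC p q')
        refine Part.mem_bind_iff.mpr ⟨q, pcomp_id_mem hqG, ?_⟩
        rw [heval]
        exact Part.mem_some _
      · refine prod_name ?_ hat_name_none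
        apply hat_name_some (maEncode_total _)
        rw [eVal_maEncode]
        exact hx'δ
      · simp only [MFn.boxplus, Sum.elim_inl]
        exact Set.mem_prod.mpr ⟨⟨y₀, hy₀f, rfl⟩, Set.mem_univ _⟩
    · rw [hx'e] at hy₀e
      exact absurd hy₀e (by simp)
  | inr x₁ =>
    obtain ⟨yy, hyy⟩ := hne
    simp only [MFn.boxplus, Sum.elim_inr] at hyy
    obtain ⟨-, hw2⟩ := Set.mem_prod.mp hyy
    rw [Set.mem_image] at hw2
    obtain ⟨w₁, hw₁, -⟩ := hw2
    have hne' : ((f.sqcup g).f (Sum.inr x₁)).Nonempty := by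
      refine ⟨Sum.inr w₁, ?_⟩
      simp only [MFn.sqcup, Sum.elim_inr]
      exact Set.mem_image_of_mem _ hw₁
    obtain ⟨q, hqG, y, hyδ, hyf⟩ := hG p (Sum.inr x₁) hx hne'
    simp only [MFn.sqcup, Sum.elim_inr] at hyf
    replace hyf := (Set.mem_image _ _ _).mp hyf
    obtain ⟨y₁, hy₁f, hy₁e⟩ := hyf
    rcases sum_name_cases hyδ with ⟨hL, x', hx'e, -⟩ | ⟨hL, x', hx'e, hx'δ⟩
    · rw [hx'e] at hy₁e
      exact absurd hy₁e (by simp)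
    · have hinj : (Sum.inr y₁ : f.B.X ⊕ g.B.X) = Sum.inr x' := by rw [hy₁e, hx'e]
      have hx'y : x' = y₁ := (Sum.inr.inj hinj).symm
      rw [hx'y] at hx'δ
      have heval := psi1_eval1 4 3 1 (pairC p q)
        (by rw [hpq1 q]; exact q0_of_left1 hL)
      rw [harg q] at heval
      refine ⟨pairC badMA (maEncode (rightC q)), ?_,
        ((none : Option f.B.X), some y₁), ?_, ?_⟩
      · show _ ∈ (pcomp G idTF.eval p).bind fun q' => (psi1TF 4 3 1).eval (pairC p q')
        refine Part.mem_bind_iff.mpr ⟨q, pcomp_id_mem hqG, ?_⟩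
        rw [heval]
        exact Part.mem_some _
      · refine prod_name hat_name_none ?_
        apply hat_name_some (maEncode_total _)
        rw [eVal_maEncode]
        exact hx'δ
      · simp only [MFn.boxplus, Sum.elim_inr]
        exact Set.mem_prod.mpr ⟨Set.mem_univ _, ⟨y₁, hy₁f, rfl⟩⟩

lemma wLe_sqcup_boxplus (f g : MFn) : wLe (f.sqcup g) (f.boxplus g) := by
  refine ⟨idTF, psi2TF, ?_⟩
  intro G hG p x hx hne
  have hpq0 : ∀ q : Cantor, pairC p q 0 = p 0 := by
    intro q; simp [pairC]
  rcases sum_name_cases hx with ⟨hL, x₀, hxe, -⟩ | ⟨hL, x₁, hxe, -⟩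
  · subst hxe
    obtain ⟨yy, hyy⟩ := hne
    simp only [MFn.sqcup, Sum.elim_inl] at hyy
    replace hyy := (Set.mem_image _ _ _).mp hyy
    obtain ⟨w₀, hw₀, -⟩ := hyy
    have hne' : ((f.boxplus g).f (Sum.inl x₀)).Nonempty := by
      refine ⟨(some w₀, none), ?_⟩
      simp only [MFn.boxplus, Sum.elim_inl]
      exact Set.mem_prod.mpr ⟨⟨w₀, hw₀, rfl⟩, Set.mem_univ _⟩
    obtain ⟨q, hqG, y, hyδ, hyf⟩ := hG p (Sum.inl x₀) hx hne'
    simp only [MFn.boxplus, Sum.elim_inl] at hyf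
    obtain ⟨hy1, -⟩ := Set.mem_prod.mp hyf
    rw [Set.mem_image] at hy1
    obtain ⟨y₀, hy₀f, hy₀e⟩ := hy1
    obtain ⟨he1, -⟩ := hat_prod_name_eq hyδ
    have hsome : ((evalMA (leftC q)).bind f.B.δ).toOption = some y₀ := by
      rw [← he1]; exact hy₀e.symm
    obtain ⟨hT, hy₀δ⟩ := toOption_some_extract hsome
    have hav : (fun k => pairC p q (4 * k + 2 * 0 + 1)) = leftC q := by
      funext k
      show pairC p q (4 * k + 2 * 0 + 1) = q (2 * k)
      have h1 : ¬ (4 * k + 2 * 0 + 1) % 2 = 0 := by omega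
      have h2 : (4 * k + 2 * 0 + 1) / 2 = 2 * k := by omega
      simp [pairC, h1, h2]
    have heval := psi2_eval (pairC p q) 0
      (by rw [hpq0 q, q0_of_left0 hL]; rfl)
      (by rw [hav]; exact hT)
    rw [hav] at heval
    refine ⟨inC 0 (eVal (leftC q)), ?_, Sum.inl y₀, ?_, ?_⟩
    · show _ ∈ (pcomp G idTF.eval p).bind fun q' => psi2TF.eval (pairC p q')
      refine Part.mem_bind_iff.mpr ⟨q, pcomp_id_mem hqG, ?_⟩
      rw [heval]
      exact Part.mem_some _
    · exact sum_name_inl hy₀δ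
    · simp only [MFn.sqcup, Sum.elim_inl]
      exact Set.mem_image_of_mem _ hy₀f
  · subst hxe
    obtain ⟨yy, hyy⟩ := hne
    simp only [MFn.sqcup, Sum.elim_inr] at hyy
    replace hyy := (Set.mem_image _ _ _).mp hyy
    obtain ⟨w₁, hw₁, -⟩ := hyy
    have hne' : ((f.boxplus g).f (Sum.inr x₁)).Nonempty := by
      refine ⟨(none, some w₁), ?_⟩
      simp only [MFn.boxplus, Sum.elim_inr]
      exact Set.mem_prod.mpr ⟨Set.mem_univ _, ⟨w₁, hw₁, rfl⟩⟩
    obtain ⟨q, hqG, y, hyδ, hyf⟩ := hG p (Sum.inr x₁) hx hne'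
    simp only [MFn.boxplus, Sum.elim_inr] at hyf
    obtain ⟨-, hy2⟩ := Set.mem_prod.mp hyf
    rw [Set.mem_image] at hy2
    obtain ⟨y₁, hy₁f, hy₁e⟩ := hy2
    obtain ⟨-, he2⟩ := hat_prod_name_eq hyδ
    have hsome : ((evalMA (rightC q)).bind g.B.δ).toOption = some y₁ := by
      rw [← he2]; exact hy₁e.symm
    obtain ⟨hT, hy₁δ⟩ := toOption_some_extract hsome
    have hav : (fun k => pairC p q (4 * k + 2 * 1 + 1)) = rightC q := by
      funext k
      show pairC p q (4 * k + 2 * 1 + 1) = q (2 * k + 1)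
      have h1 : ¬ (4 * k + 2 * 1 + 1) % 2 = 0 := by omega
      have h2 : (4 * k + 2 * 1 + 1) / 2 = 2 * k + 1 := by omega
      simp [pairC, h1, h2]
    have heval := psi2_eval (pairC p q) 1
      (by rw [hpq0 q, q0_of_left1 hL]; rfl)
      (by rw [hav]; exact hT)
    rw [hav] at heval
    refine ⟨inC 1 (eVal (rightC q)), ?_, Sum.inr y₁, ?_, ?_⟩
    · show _ ∈ (pcomp G idTF.eval p).bind fun q' => psi2TF.eval (pairC p q')
      refine Part.mem_bind_iff.mpr ⟨q, pcomp_id_mem hqG, ?_⟩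
      rw [heval]
      exact Part.mem_some _
    · exact sum_name_inr hy₁δ
    · simp only [MFn.sqcup, Sum.elim_inr]
      exact Set.mem_image_of_mem _ hy₁f

end Reductions

end StmtAux

/-- Proposition 3.11: `f ⊞ g ≡_W f ⊔ g`; indeed `f ⊞ g ≤_sW f ⊔ g` and
`f ⊔ g ≤_W f ⊞ g`. -/
theorem stmt8 : ∀ f g : MFn,
    wEq (f.boxplus g) (f.sqcup g) ∧
    sWLe (f.boxplus g) (f.sqcup g) ∧ wLe (f.sqcup g) (f.boxplus g) := by
  intro f g
  exact ⟨⟨wLe_boxplus_sqcup f g, wLe_sqcup_boxplus f g⟩,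
    sWLe_boxplus_sqcup f g, wLe_sqcup_boxplus f g⟩

end

end StrongWeihrauch
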